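/- In any 2-colouring of the edges of the complete graph K_n in which every vertex has red degree at least 2k-2, either the red graph is k-connected, or the blue graph contains a k-connected subgraph on at least n - k + 1 vertices. -/

import Mathlib

def IsKConnected {V : Type*} (k : ℕ) (G : SimpleGraph V) : Prop :=
  k < Nat.card V ∧ ∀ S : Set V, S.ncard < k → (G.induce Sᶜ).Connected

def colorGraph (n r : ℕ) (f : Sym2 (Fin n) → Fin r) (i : Fin r) :
    SimpleGraph (Fin n) where
  Adj a b := a ≠ b ∧ f s(a, b) = i
  symm := ⟨fun a b h => ⟨h.1.symm, by rw [Sym2.eq_swap]; exact h.2⟩⟩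
  loopless := ⟨fun a h => h.1 rfl⟩

theorem stmt3 (n k : ℕ) (hn : 2 ≤ n) (hk : 1 ≤ k)
    (f : Sym2 (Fin n) → Fin 2)
    (hdeg : ∀ v : Fin n, 2 * k - 2 ≤ ((colorGraph n 2 f 0).neighborSet v).ncard) :
    IsKConnected k (colorGraph n 2 f 0) ∨
      ∃ A : Set (Fin n), n - k + 1 ≤ A.ncard ∧
        IsKConnected k ((colorGraph n 2 f 1).induce A) := by
  classical
  set R := colorGraph n 2 f 0 with hRdef
  set B := colorGraph n 2 f 1 with hBdef
  have hcardFin : Nat.card (Fin n) = n := by simp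
  -- k < n
  have hkn : k < n := by
    set v0 : Fin n := ⟨0, by omega⟩ with hv0
    have h0 := hdeg v0
    have hsub : R.neighborSet v0 ⊆ {v0}ᶜ := by
      intro w hw
      simp only [Set.mem_compl_iff, Set.mem_singleton_iff]
      intro h
      exact R.loopless.irrefl v0 (h ▸ hw)
    have h1 : (R.neighborSet v0).ncard ≤ ({v0}ᶜ : Set (Fin n)).ncard :=
      Set.ncard_le_ncard hsub (Set.toFinite _)
    have h2 : ({v0} : Set (Fin n)).ncard + ({v0}ᶜ : Set (Fin n)).ncard = n := by
      rw [Set.ncard_add_ncard_compl]; simp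
    have h3 : ({v0} : Set (Fin n)).ncard = 1 := Set.ncard_singleton _
    omega
  by_cases hRc : IsKConnected k R
  · exact Or.inl hRc
  rw [IsKConnected] at hRc
  push_neg at hRc
  obtain ⟨S, hSk, hSdisc⟩ := hRc (by rw [hcardFin]; exact hkn)
  -- Sᶜ is nonempty
  have hScne : (Sᶜ : Set (Fin n)).Nonempty := by
    rw [Set.nonempty_compl]
    intro h
    rw [h, Set.ncard_univ, hcardFin] at hSk
    omega
  have hScne' : Nonempty ↥(Sᶜ : Set (Fin n)) := hScne.to_subtype
  rw [SimpleGraph.connected_iff] at hSdisc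
  push_neg at hSdisc
  have hnp : ¬ (R.induce Sᶜ).Preconnected := fun hp => (not_isEmpty_iff.mpr hScne') (hSdisc hp)
  unfold SimpleGraph.Preconnected at hnp
  push_neg at hnp
  obtain ⟨x, y, hxy⟩ := hnp
  -- C : red component of x inside Sᶜ ; D : the rest
  set C : Set (Fin n) := {v | ∃ h : v ∈ Sᶜ, (R.induce Sᶜ).Reachable x ⟨v, h⟩} with hCdef
  set D : Set (Fin n) := Sᶜ \ C with hDdef
  have hCsub : C ⊆ Sᶜ := fun v hv => hv.1
  have hDsub : D ⊆ Sᶜ := fun v hv => hv.1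
  have hCD : Disjoint C D := Set.disjoint_sdiff_right.mono_left le_rfl
  -- closure of C under red edges within Sᶜ
  have hCclosed : ∀ v ∈ C, ∀ w ∈ (Sᶜ : Set (Fin n)), R.Adj v w → w ∈ C := by
    rintro v ⟨hv, hr⟩ w hw hadj
    exact ⟨hw, hr.trans (SimpleGraph.Adj.reachable
      (show (R.induce Sᶜ).Adj ⟨v, hv⟩ ⟨w, hw⟩ from hadj))⟩
  have hDclosed : ∀ v ∈ D, ∀ w ∈ (Sᶜ : Set (Fin n)), R.Adj v w → w ∈ D := by
    rintro v ⟨hv, hvC⟩ w hw hadj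
    refine ⟨hw, fun hwC => hvC ?_⟩
    exact hCclosed w hwC v hv hadj.symm
  have hxC : (↑x : Fin n) ∈ C := ⟨x.2, by rw [Subtype.coe_eta]⟩
  have hyD : (↑y : Fin n) ∈ D := by
    refine ⟨y.2, fun ⟨h, hr⟩ => hxy ?_⟩
    rwa [Subtype.coe_eta] at hr
  -- size bound
  have hsize : ∀ P : Set (Fin n), P ⊆ Sᶜ →
      (∀ v ∈ P, ∀ w ∈ (Sᶜ : Set (Fin n)), R.Adj v w → w ∈ P) →
      ∀ v ∈ P, k ≤ P.ncard := by
    intro P hPsub hPcl v hv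
    have hnsub : R.neighborSet v ⊆ (P \ {v}) ∪ S := by
      intro w hw
      rw [SimpleGraph.mem_neighborSet] at hw
      by_cases hwS : w ∈ S
      · exact Or.inr hwS
      · exact Or.inl ⟨hPcl v hv w hwS hw, fun h => R.loopless.irrefl v (h ▸ hw).symm⟩
    have h1 : (R.neighborSet v).ncard ≤ ((P \ {v}) ∪ S).ncard :=
      Set.ncard_le_ncard hnsub (Set.toFinite _)
    have h2 : ((P \ {v}) ∪ S).ncard ≤ (P \ {v}).ncard + S.ncard := Set.ncard_union_le _ _
    have h3 : (P \ {v}).ncard = P.ncard - 1 := Set.ncard_diff_singleton_of_mem hv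
    have h4 : 0 < P.ncard := (Set.ncard_pos (Set.toFinite _)).mpr ⟨v, hv⟩
    have h5 := hdeg v
    omega
  have hCk : k ≤ C.ncard := hsize C hCsub hCclosed _ hxC
  have hDk : k ≤ D.ncard := hsize D hDsub hDclosed _ hyD
  -- blue edges between C and D
  have hblue : ∀ a ∈ C, ∀ b ∈ D, B.Adj a b := by
    intro a ha b hb
    have hab : a ≠ b := fun h => (hb.2) (h ▸ ha)
    show a ≠ b ∧ f s(a, b) = 1
    refine ⟨hab, ?_⟩
    have h2 : f s(a, b) = 0 ∨ f s(a, b) = 1 := by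
      have := Fin.is_le (f s(a, b)); omega
    rcases h2 with h2 | h2
    · exact absurd (hCclosed a ha b hb.1 ⟨hab, h2⟩) hb.2
    · exact h2
  -- cardinality of A = Sᶜ
  have hAcard : (Sᶜ : Set (Fin n)).ncard = C.ncard + D.ncard := by
    rw [hDdef]
    rw [← Set.ncard_diff_add_ncard_of_subset hCsub]
    omega
  have hScard : S.ncard + (Sᶜ : Set (Fin n)).ncard = n := by
    rw [Set.ncard_add_ncard_compl, hcardFin]
  refine Or.inr ⟨Sᶜ, by omega, ?_, ?_⟩
  · rw [Nat.card_coe_set_eq]; omega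
  · intro S' hS'
    set T : Set (Fin n) := Subtype.val '' S' with hTdef
    have hTcard : T.ncard = S'.ncard := Set.ncard_image_of_injective _ Subtype.val_injective
    -- find c0 ∈ C \ T and d0 ∈ D \ T
    have hpick : ∀ P : Set (Fin n), k ≤ P.ncard → (P \ T).Nonempty := by
      intro P hP
      rw [← Set.ncard_pos (Set.toFinite _)]
      have hsub : P ⊆ (P \ T) ∪ T := by
        intro w hw; by_cases h : w ∈ T
        · exact Or.inr h
        · exact Or.inl ⟨hw, h⟩
      have := Set.ncard_le_ncard hsub (Set.toFinite _)
      have := Set.ncard_union_le (P \ T) T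
      omega
    obtain ⟨c0, hc0C, hc0T⟩ := hpick C hCk
    obtain ⟨d0, hd0D, hd0T⟩ := hpick D hDk
    have hc0A : c0 ∈ (Sᶜ : Set (Fin n)) := hCsub hc0C
    have hd0A : d0 ∈ (Sᶜ : Set (Fin n)) := hDsub hd0D
    have hmem : ∀ (v : Fin n) (hv : v ∈ (Sᶜ : Set (Fin n))), v ∉ T →
        (⟨v, hv⟩ : ↥(Sᶜ : Set (Fin n))) ∈ S'ᶜ := by
      intro v hv hvT h
      exact hvT ⟨⟨v, hv⟩, h, rfl⟩
    set G2 := (B.induce Sᶜ).induce S'ᶜ with hG2def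
    have hG2adj : ∀ p q : ↥(S'ᶜ), B.Adj ↑↑p ↑↑q → G2.Adj p q := by
      intro p q h; exact h
    set c0v : ↥(S'ᶜ) := ⟨⟨c0, hc0A⟩, hmem c0 hc0A hc0T⟩ with hc0v
    set d0v : ↥(S'ᶜ) := ⟨⟨d0, hd0A⟩, hmem d0 hd0A hd0T⟩ with hd0v
    -- every vertex reaches c0v
    have hreach : ∀ u : ↥(S'ᶜ), G2.Reachable u c0v := by
      intro u
      have hu : (↑↑u : Fin n) ∈ (Sᶜ : Set (Fin n)) := (↑u : ↥(Sᶜ : Set (Fin n))).2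
      by_cases huC : (↑↑u : Fin n) ∈ C
      · exact (SimpleGraph.Adj.reachable (hG2adj u d0v (hblue _ huC _ hd0D))).trans
          (SimpleGraph.Adj.reachable (hG2adj d0v c0v (hblue _ hc0C _ hd0D).symm))
      · exact SimpleGraph.Adj.reachable (hG2adj u c0v (hblue _ hc0C _ ⟨hu, huC⟩).symm)
    rw [SimpleGraph.connected_iff]
    exact ⟨fun u v => (hreach u).trans (hreach v).symm, ⟨c0v⟩⟩
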